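/- Let ℓ : ℝ → ℝ be differentiable, non-decreasing, with ℓ'(z) = 0 if and only if z ≤ -z₀ for some z₀ > 0. Suppose (x_i, y_i), i = 1,...,n, with y_i ∈ {-1,1}, are linearly separable: there exists w ∈ ℝ^d with y_i · ⟨w, x_i⟩ > 0 for all i. Let f(x; θ) be a predictor of the form f(x;θ) = f_D(x; θ_D) + a₀ + ∑_{j=1}^M a_j σ(⟨w_j, x⟩), where σ is differentiable with σ'(z) > 0 for all z, and f_D is any function of x not depending on (a₀, a_j, w_j). If θ* is a point where for each j the gradient condition ∑_i ℓ'(-y_i f(x_i;θ*)) · y_i · σ'(⟨w_j*, x_i⟩) · x_i = 0 holds, then ℓ'(-y_i f(x_i; θ*)) = 0 for all i, hence y_i f(x_i; θ*) ≥ z₀ > 0 for all i and the training error is zero. -/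
import Mathlib


/-- Linearly separable data: at any point where the first-order condition in the
hidden weights holds, all loss derivatives vanish and all margins are at least `z₀`,
hence the training error is zero. -/
theorem linearly_separable_gradient_condition_implies_zero_error
    (d n M : ℕ) (hM : 0 < M)
    (x : Fin n → Fin d → ℝ) (y : Fin n → ℝ) (hy : ∀ i, y i = 1 ∨ y i = -1)
    (ℓ : ℝ → ℝ) (hℓd : Differentiable ℝ ℓ) (z₀ : ℝ) (hz₀ : 0 < z₀)
    (hℓ' : ∀ z : ℝ, 0 ≤ deriv ℓ z)
    (hℓ0 : ∀ z : ℝ, deriv ℓ z = 0 ↔ z ≤ -z₀)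
    (σ : ℝ → ℝ) (hσd : Differentiable ℝ σ) (hσ' : ∀ z : ℝ, 0 < deriv σ z)
    (w : Fin d → ℝ) (hsep : ∀ i, 0 < y i * ∑ k, w k * x i k)
    (fD : (Fin d → ℝ) → ℝ) (a0 : ℝ) (a : Fin M → ℝ) (wj : Fin M → Fin d → ℝ)
    (F : Fin n → ℝ)
    (hF : ∀ i, F i = fD (x i) + a0 + ∑ j, a j * σ (∑ k, wj j k * x i k))
    (hgrad : ∀ j, ∑ i,
        (deriv ℓ (-(y i) * F i) * y i * deriv σ (∑ k, wj j k * x i k)) • x i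
        = (0 : Fin d → ℝ)) :
    ∀ i, deriv ℓ (-(y i) * F i) = 0 ∧ z₀ ≤ y i * F i := by
  set j0 : Fin M := ⟨0, hM⟩
  set c : Fin n → ℝ :=
    fun i => deriv ℓ (-(y i) * F i) * y i * deriv σ (∑ k, wj j0 k * x i k) with hc
  have h := hgrad j0
  have hS : ∑ i, c i * (∑ k, w k * x i k) = 0 := by
    have : ∑ k, w k * ((∑ i, c i • x i) k) = 0 := by
      rw [h]; simp
    rw [← this]
    simp only [Finset.sum_apply, Pi.smul_apply, smul_eq_mul, Finset.mul_sum]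
    rw [Finset.sum_comm]
    exact Finset.sum_congr rfl fun i _ => Finset.sum_congr rfl fun k _ => by ring
  have hterm : ∀ i, c i * (∑ k, w k * x i k)
      = deriv ℓ (-(y i) * F i) * deriv σ (∑ k, wj j0 k * x i k)
        * (y i * ∑ k, w k * x i k) := by
    intro i; simp [hc]; ring
  have hnonneg : ∀ i ∈ Finset.univ, 0 ≤ c i * (∑ k, w k * x i k) := by
    intro i _
    rw [hterm i]
    exact mul_nonneg (mul_nonneg (hℓ' _) (hσ' _).le) (hsep i).le
  have hzero := (Finset.sum_eq_zero_iff_of_nonneg hnonneg).mp hS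
  intro i
  have hi := hzero i (Finset.mem_univ i)
  rw [hterm i] at hi
  have hℓz : deriv ℓ (-(y i) * F i) = 0 := by
    rcases mul_eq_zero.mp hi with h1 | h2
    · rcases mul_eq_zero.mp h1 with h3 | h4
      · exact h3
      · exact absurd h4 (hσ' _).ne'
    · exact absurd h2 (hsep i).ne'
  refine ⟨hℓz, ?_⟩
  have hle : -(y i) * F i ≤ -z₀ := (hℓ0 _).mp hℓz
  nlinarith [hle]
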